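/- Let ℓ be a prime and d₁, d₂ ≥ 1. Let N be the number of pairs (P₁,P₂) of non-zero polynomials in 𝔽_ℓ[t] with deg Pᵢ ≤ dᵢ such that the product P₁(x)P₂(x) vanishes for every x ∈ 𝔽_ℓ. Then N ≤ 2^ℓ · ℓ^{2+d₁+d₂−ℓ}. -/

import Mathlib

open Polynomial


variable {ℓ : ℕ} [Fact ℓ.Prime]

/-- nonzero polys of bounded degree inject into coefficient tuples -/
lemma coeff_inj (e : ℕ) :
    Function.Injective (fun (P : {Q : Polynomial (ZMod ℓ) // Q ≠ 0 ∧ Q.natDegree ≤ e}) =>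
      (fun i : Fin (e+1) => P.1.coeff i)) := by
  rintro ⟨P, hP, hPd⟩ ⟨Q, hQ, hQd⟩ h
  ext1
  ext n
  by_cases hn : n ≤ e
  · exact congrFun h ⟨n, Nat.lt_succ_of_le hn⟩
  · rw [Polynomial.coeff_eq_zero_of_natDegree_lt (lt_of_le_of_lt hPd (by omega)),
      Polynomial.coeff_eq_zero_of_natDegree_lt (lt_of_le_of_lt hQd (by omega))]

instance fin_nonzero (e : ℕ) : Finite {Q : Polynomial (ZMod ℓ) // Q ≠ 0 ∧ Q.natDegree ≤ e} :=
  Finite.of_injective _ (coeff_inj e)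

lemma card_nonzero_le (e : ℕ) :
    Nat.card {Q : Polynomial (ZMod ℓ) // Q ≠ 0 ∧ Q.natDegree ≤ e} ≤ ℓ ^ (e + 1) := by
  have := Nat.card_le_card_of_injective _ (coeff_inj (ℓ := ℓ) e)
  simpa [Nat.card_eq_fintype_card, ZMod.card] using this

lemma prod_dvd_of_vanish {P : Polynomial (ZMod ℓ)} (hP : P ≠ 0) (S : Finset (ZMod ℓ))
    (hv : ∀ a ∈ S, P.eval a = 0) : (∏ a ∈ S, (X - C a)) ∣ P := by
  have hle : S.val ≤ P.roots := by
    refine Multiset.le_iff_count.mpr fun a => ?_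
    by_cases ha : a ∈ S
    · have h1 : Multiset.count a S.val = 1 := Multiset.count_eq_one_of_mem S.nodup ha
      rw [h1]
      exact Multiset.one_le_count_iff_mem.mpr (by
        rw [Polynomial.mem_roots hP]; exact hv a ha)
    · simp [Multiset.count_eq_zero.mpr (by exact ha)]
  have := (Multiset.prod_X_sub_C_dvd_iff_le_roots hP S.val).mpr hle
  rwa [← Finset.prod_eq_multiset_prod] at this

lemma card_vanish_le (d : ℕ) (S : Finset (ZMod ℓ)) :
    (Nat.card {Q : Polynomial (ZMod ℓ) // Q ≠ 0 ∧ Q.natDegree ≤ d ∧ ∀ a ∈ S, Q.eval a = 0} : ℝ)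
      ≤ (ℓ : ℝ) ^ ((d : ℤ) + 1 - S.card) := by
  have hℓ : ℓ.Prime := Fact.out
  have hℓ0 : (0 : ℝ) < (ℓ : ℝ) := by exact_mod_cast hℓ.pos
  set m : Polynomial (ZMod ℓ) := ∏ a ∈ S, (X - C a) with hm
  have hmon : m.Monic := monic_prod_of_monic _ _ fun a _ => monic_X_sub_C a
  have hmdeg : m.natDegree = S.card := by
    rw [hm, natDegree_prod _ _ fun a _ => X_sub_C_ne_zero a]
    simp
  by_cases hne : Nonempty {Q : Polynomial (ZMod ℓ) // Q ≠ 0 ∧ Q.natDegree ≤ d ∧ ∀ a ∈ S, Q.eval a = 0}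
  · obtain ⟨⟨P₀, hP₀, hP₀d, hP₀v⟩⟩ := hne
    -- S.card ≤ d since P₀ has ≥ S.card roots
    have hsd : S.card ≤ d := by
      have h1 : S.card ≤ Multiset.card P₀.roots := by
        have : S.val ≤ P₀.roots := by
          have := prod_dvd_of_vanish hP₀ S hP₀v
          rw [Finset.prod_eq_multiset_prod] at this
          rwa [← Multiset.prod_X_sub_C_dvd_iff_le_roots hP₀]
        simpa using Multiset.card_le_card this
      exact h1.trans ((P₀.card_roots').trans hP₀d)
    -- injection via division by m
    have hinj : Function.Injective
        (fun (P : {Q : Polynomial (ZMod ℓ) // Q ≠ 0 ∧ Q.natDegree ≤ d ∧ ∀ a ∈ S, Q.eval a = 0}) =>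
          (⟨P.1 /ₘ m, by
            obtain ⟨P, hP, hPd, hPv⟩ := P
            have hdvd := prod_dvd_of_vanish hP S hPv
            have heq : m * (P /ₘ m) = P := by
              have := Polynomial.modByMonic_add_div P m
              rwa [(Polynomial.modByMonic_eq_zero_iff_dvd hmon).mpr hdvd, zero_add] at this
            constructor
            · intro h0; rw [h0, mul_zero] at heq; exact hP heq.symm
            · rw [Polynomial.natDegree_divByMonic P hmon, hmdeg]; omega⟩ :
            {Q : Polynomial (ZMod ℓ) // Q ≠ 0 ∧ Q.natDegree ≤ d - S.card})) := by
      rintro ⟨P, hP, hPd, hPv⟩ ⟨Q, hQ, hQd, hQv⟩ h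
      simp only [Subtype.mk.injEq] at h
      have heqP : m * (P /ₘ m) = P := by
        have := Polynomial.modByMonic_add_div P m
        rwa [(Polynomial.modByMonic_eq_zero_iff_dvd hmon).mpr (prod_dvd_of_vanish hP S hPv),
          zero_add] at this
      have heqQ : m * (Q /ₘ m) = Q := by
        have := Polynomial.modByMonic_add_div Q m
        rwa [(Polynomial.modByMonic_eq_zero_iff_dvd hmon).mpr (prod_dvd_of_vanish hQ S hQv),
          zero_add] at this
      have : P = Q := by rw [← heqP, ← heqQ, h]
      exact Subtype.ext this
    have hcard := Nat.card_le_card_of_injective _ hinj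
    have hbound := card_nonzero_le (ℓ := ℓ) (d - S.card)
    have : (Nat.card {Q : Polynomial (ZMod ℓ) // Q ≠ 0 ∧ Q.natDegree ≤ d ∧ ∀ a ∈ S, Q.eval a = 0} : ℝ)
        ≤ (ℓ : ℝ) ^ (d - S.card + 1) := by
      exact_mod_cast (hcard.trans hbound)
    refine this.trans ?_
    rw [show ((d : ℤ) + 1 - S.card) = ((d - S.card + 1 : ℕ) : ℤ) by push_cast; omega]
    rw [zpow_natCast]
  · haveI := not_nonempty_iff.mp hne
    rw [Nat.card_of_isEmpty]
    simp only [Nat.cast_zero]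
    positivity

instance fin_vanish (d : ℕ) (S : Finset (ZMod ℓ)) :
    Finite {Q : Polynomial (ZMod ℓ) // Q ≠ 0 ∧ Q.natDegree ≤ d ∧ ∀ a ∈ S, Q.eval a = 0} :=
  Finite.of_injective
    (fun P => (⟨P.1, P.2.1, P.2.2.1⟩ : {Q : Polynomial (ZMod ℓ) // Q ≠ 0 ∧ Q.natDegree ≤ d}))
    (fun P Q h => Subtype.ext (Subtype.mk_eq_mk.mp h))

/-- **Bound for the number of pairs of non-zero polynomials over `𝔽_ℓ` whose
product vanishes identically:** `N ≤ 2^ℓ · ℓ^{2+d₁+d₂−ℓ}`. -/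
theorem count_vanishing_pairs_le
    (ℓ : ℕ) (hℓ : ℓ.Prime) (d₁ d₂ : ℕ) (hd₁ : 1 ≤ d₁) (hd₂ : 1 ≤ d₂) :
    (Nat.card {P : Polynomial (ZMod ℓ) × Polynomial (ZMod ℓ) //
        P.1 ≠ 0 ∧ P.2 ≠ 0 ∧ P.1.natDegree ≤ d₁ ∧ P.2.natDegree ≤ d₂ ∧
        ∀ x : ZMod ℓ, P.1.eval x * P.2.eval x = 0} : ℝ)
      ≤ 2 ^ ℓ * (ℓ : ℝ) ^ ((2 + d₁ + d₂ : ℤ) - (ℓ : ℤ)) := by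
  haveI : Fact ℓ.Prime := ⟨hℓ⟩
  have hℓ0 : (0 : ℝ) < (ℓ : ℝ) := by exact_mod_cast hℓ.pos
  set V : ℕ → Finset (ZMod ℓ) → Type := fun d S =>
    {Q : Polynomial (ZMod ℓ) // Q ≠ 0 ∧ Q.natDegree ≤ d ∧ ∀ a ∈ S, Q.eval a = 0} with hV
  -- injection into sigma type
  set f : {P : Polynomial (ZMod ℓ) × Polynomial (ZMod ℓ) //
        P.1 ≠ 0 ∧ P.2 ≠ 0 ∧ P.1.natDegree ≤ d₁ ∧ P.2.natDegree ≤ d₂ ∧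
        ∀ x : ZMod ℓ, P.1.eval x * P.2.eval x = 0} →
      (Σ S : Finset (ZMod ℓ), V d₁ S × V d₂ Sᶜ) := fun P =>
    ⟨Finset.univ.filter (fun x => P.1.1.eval x = 0),
      ⟨P.1.1, P.2.1, P.2.2.2.1, fun a ha => (Finset.mem_filter.mp ha).2⟩,
      ⟨P.1.2, P.2.2.1, P.2.2.2.2.1, fun a ha => by
        have h1 : ¬ P.1.1.eval a = 0 := by
          intro h
          exact (Finset.mem_compl.mp ha) (Finset.mem_filter.mpr ⟨Finset.mem_univ a, h⟩)
        have := P.2.2.2.2.2 a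
        rcases mul_eq_zero.mp this with h | h
        · exact absurd h h1
        · exact h⟩⟩ with hf
  have hfinj : Function.Injective f := by
    intro P Q h
    have h2 := congrArg (fun z : (Σ S : Finset (ZMod ℓ), V d₁ S × V d₂ Sᶜ) =>
      (z.2.1.1, z.2.2.1)) h
    simp only [f] at h2
    exact Subtype.ext (Prod.ext (congrArg Prod.fst h2) (congrArg Prod.snd h2))
  have hcard := Nat.card_le_card_of_injective f hfinj
  -- card of sigma
  classical
  haveI : ∀ S : Finset (ZMod ℓ), Fintype (V d₁ S × V d₂ Sᶜ) := fun S => Fintype.ofFinite _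
  have hsig : Nat.card (Σ S : Finset (ZMod ℓ), V d₁ S × V d₂ Sᶜ)
      = ∑ S : Finset (ZMod ℓ), Nat.card (V d₁ S) * Nat.card (V d₂ Sᶜ) := by
    rw [Nat.card_eq_fintype_card, Fintype.card_sigma]
    exact Finset.sum_congr rfl fun S _ => by
      rw [← Nat.card_eq_fintype_card, Nat.card_prod]
  rw [hsig] at hcard
  have step : (Nat.card {P : Polynomial (ZMod ℓ) × Polynomial (ZMod ℓ) //
        P.1 ≠ 0 ∧ P.2 ≠ 0 ∧ P.1.natDegree ≤ d₁ ∧ P.2.natDegree ≤ d₂ ∧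
        ∀ x : ZMod ℓ, P.1.eval x * P.2.eval x = 0} : ℝ)
      ≤ ∑ S : Finset (ZMod ℓ), (ℓ : ℝ) ^ ((d₁ : ℤ) + 1 - S.card) *
          (ℓ : ℝ) ^ ((d₂ : ℤ) + 1 - (Sᶜ).card) := by
    calc (Nat.card _ : ℝ) ≤
        ((∑ S : Finset (ZMod ℓ), Nat.card (V d₁ S) * Nat.card (V d₂ Sᶜ) : ℕ) : ℝ) := by
          exact_mod_cast hcard
      _ = ∑ S : Finset (ZMod ℓ), (Nat.card (V d₁ S) : ℝ) * (Nat.card (V d₂ Sᶜ) : ℝ) := by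
          push_cast; rfl
      _ ≤ _ := by
          refine Finset.sum_le_sum fun S _ => ?_
          exact mul_le_mul (card_vanish_le d₁ S) (card_vanish_le d₂ Sᶜ)
            (by positivity) (by positivity)
  refine step.trans ?_
  have hexp : ∀ S : Finset (ZMod ℓ),
      (ℓ : ℝ) ^ ((d₁ : ℤ) + 1 - S.card) * (ℓ : ℝ) ^ ((d₂ : ℤ) + 1 - (Sᶜ).card)
        = (ℓ : ℝ) ^ ((2 + d₁ + d₂ : ℤ) - (ℓ : ℤ)) := by
    intro S
    rw [← zpow_add₀ (ne_of_gt hℓ0)]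
    congr 1
    have h1 : (Sᶜ).card = ℓ - S.card := by
      rw [Finset.card_compl, ZMod.card]
    have h2 : S.card ≤ ℓ := by
      simpa [ZMod.card] using Finset.card_le_univ S
    rw [h1]
    push_cast [Nat.cast_sub h2]
    ring
  rw [Finset.sum_congr rfl fun S _ => hexp S, Finset.sum_const, nsmul_eq_mul,
    Finset.card_univ, Fintype.card_finset, ZMod.card]
  push_cast
  exact le_rfl
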